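/- Let C ⊆ L0+ be convex, max-closed and bounded, and let S = {f ∈ L0+ : f ≤ g a.s. for some g ∈ C} be its solid hull. Then S is solid, convex, closed in the topology of convergence in probability, and bounded. -/

import Mathlib

open MeasureTheory Filter Set

noncomputable section

variable {Ω : Type*} [MeasurableSpace Ω]

/-- The nonnegative orthant `L⁰₊` of the space `L⁰` of (a.e.-equivalence classes of)
random variables over `(Ω, ℱ, P)`. -/
def L0plus (P : Measure Ω) : Set (Ω →ₘ[P] ℝ) := {f | 0 ≤ f}

/-- The metric `(f, g) ↦ E[1 ∧ |f - g|]` inducing the topology of convergence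
in probability on `L⁰`. -/
def dist0 (P : Measure Ω) (f g : Ω →ₘ[P] ℝ) : ℝ :=
  ∫ ω, min 1 |f ω - g ω| ∂P

/-- Convergence in probability of a sequence in `L⁰`. -/
def Tendsto0 (P : Measure Ω) (f : ℕ → Ω →ₘ[P] ℝ) (g : Ω →ₘ[P] ℝ) : Prop :=
  Tendsto (fun n => dist0 P (f n) g) atTop (nhds 0)

/-- Closure of a set in `L⁰` with respect to the topology of convergence in probability. -/
def closure0 (P : Measure Ω) (C : Set (Ω →ₘ[P] ℝ)) : Set (Ω →ₘ[P] ℝ) :=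
  {f | ∀ ε : ℝ, 0 < ε → ∃ g ∈ C, dist0 P f g < ε}

/-- A set of `L⁰` is closed iff it contains its closure. -/
def IsClosed0 (P : Measure Ω) (C : Set (Ω →ₘ[P] ℝ)) : Prop :=
  closure0 P C ⊆ C

/-- Boundedness (in probability) of a set `C ⊆ L⁰₊` : `lim_{ℓ → ∞} sup_{f ∈ C} P[f > ℓ] = 0`. -/
def Bounded0 (P : Measure Ω) (C : Set (Ω →ₘ[P] ℝ)) : Prop :=
  Tendsto (fun ℓ : ℝ => ⨆ f ∈ C, P {ω | ℓ < f ω}) atTop (nhds 0)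

/-- The set `C^max` of maximal elements of `C ⊆ L⁰₊` : `f ∈ C` such that `f ≤ g` a.s.
and `g ∈ C` imply `f = g` a.s. -/
def maxSet (P : Measure Ω) (C : Set (Ω →ₘ[P] ℝ)) : Set (Ω →ₘ[P] ℝ) :=
  {f | f ∈ C ∧ ∀ g ∈ C, f ≤ g → f = g}

/-- `C` is max-closed if every maximal element of its closure already belongs to `C`. -/
def MaxClosed (P : Measure Ω) (C : Set (Ω →ₘ[P] ℝ)) : Prop :=
  maxSet P (closure0 P C) ⊆ C

/-- The pairing `⟨μ, f⟩ = ∫ f dμ ∈ [0, ∞]` between a nonnegative measure `μ` and `f ∈ L⁰₊`. -/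
def pairing {P : Measure Ω} (μ : Measure Ω) (f : Ω →ₘ[P] ℝ) : ENNReal :=
  ∫⁻ ω, ENNReal.ofReal (f ω) ∂μ

/-- The set `C^osp` of outer support points of `C ⊆ L⁰₊`: points `g ∈ C^max` for which there
is a σ-finite nonnegative measure `μ ≪ P` with `0 < sup_{f ∈ C} ⟨μ, f⟩ = ⟨μ, g⟩ < ∞`;
by convention `{0}^osp = {0}`. -/
def osp (P : Measure Ω) (C : Set (Ω →ₘ[P] ℝ)) : Set (Ω →ₘ[P] ℝ) :=
  {g | g ∈ maxSet P C ∧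
    (C = {0} ∨ ∃ μ : Measure Ω, μ ≪ P ∧ SigmaFinite μ ∧
      0 < pairing μ g ∧ pairing μ g < ⊤ ∧ (⨆ f ∈ C, pairing μ f) = pairing μ g)}

/-- The solid hull of `C ⊆ L⁰₊`. -/
def solidHull (P : Measure Ω) (C : Set (Ω →ₘ[P] ℝ)) : Set (Ω →ₘ[P] ℝ) :=
  {f | f ∈ L0plus P ∧ ∃ g ∈ C, f ≤ g}

/-- A set `S ⊆ L⁰₊` is solid if `g ∈ S` and `0 ≤ f ≤ g` imply `f ∈ S`. -/
def Solid (P : Measure Ω) (S : Set (Ω →ₘ[P] ℝ)) : Prop :=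
  ∀ g ∈ S, ∀ f : Ω →ₘ[P] ℝ, 0 ≤ f → f ≤ g → f ∈ S

/-- `(g n)` is a sequence of forward convex combinations of `(f n)`. -/
def ForwardConvexComb (P : Measure Ω) (f g : ℕ → Ω →ₘ[P] ℝ) : Prop :=
  ∀ n : ℕ, g n ∈ convexHull ℝ (f '' Set.Ici n)

end

section Lemmas
set_option linter.unusedSectionVars false
set_option linter.unusedVariables false
set_option linter.unnecessarySimpa false
set_option linter.unusedTactic false
variable {Ω : Type*} [MeasurableSpace Ω] (P : Measure Ω) [IsProbabilityMeasure P]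


/-- utility function for L0 arguments -/
noncomputable def uu (x : ℝ) : ℝ := 1 - Real.exp (-(max x 0))

lemma uu_continuous : Continuous uu :=
  continuous_const.sub ((continuous_id.max continuous_const).neg.rexp)

lemma uu_mono : Monotone uu := by
  intro x y hxy
  have : -(max y 0) ≤ -(max x 0) := neg_le_neg (max_le_max hxy le_rfl)
  exact sub_le_sub_left (Real.exp_le_exp.2 this) 1

lemma uu_nonneg (x : ℝ) : 0 ≤ uu x := by
  have : Real.exp (-(max x 0)) ≤ 1 := Real.exp_le_one_iff.2 (neg_nonpos.2 (le_max_right _ _))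
  simpa [uu] using this

lemma uu_le_one (x : ℝ) : uu x ≤ 1 := by
  have : 0 < Real.exp (-(max x 0)) := Real.exp_pos _
  simp only [uu]; linarith

lemma uu_of_nonneg {x : ℝ} (hx : 0 ≤ x) : uu x = 1 - Real.exp (-x) := by
  simp [uu, max_eq_left hx]

lemma uu_inj_of_nonneg {x y : ℝ} (hx : 0 ≤ x) (hy : 0 ≤ y) (h : uu x = uu y) : x = y := by
  rw [uu_of_nonneg hx, uu_of_nonneg hy] at h
  have := Real.exp_injective (by linarith : Real.exp (-x) = Real.exp (-y))
  linarith

lemma uu_midpoint {x y : ℝ} (hx : 0 ≤ x) (hy : 0 ≤ y) :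
    uu ((x + y) / 2) - (uu x + uu y) / 2
      = (Real.exp (-(x/2)) - Real.exp (-(y/2))) ^ 2 / 2 := by
  rw [uu_of_nonneg hx, uu_of_nonneg hy, uu_of_nonneg (by linarith : (0:ℝ) ≤ (x + y)/2)]
  have hxy : Real.exp (-((x + y)/2)) = Real.exp (-(x/2)) * Real.exp (-(y/2)) := by
    rw [← Real.exp_add]; ring_nf
  have hx2 : Real.exp (-(x/2)) ^ 2 = Real.exp (-x) := by
    rw [← Real.exp_nat_mul]; norm_num; congr 1; ring
  have hy2 : Real.exp (-(y/2)) ^ 2 = Real.exp (-y) := by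
    rw [← Real.exp_nat_mul]; norm_num; congr 1; ring
  nlinarith [hxy, hx2, hy2]

lemma uu_midpoint_quant {M ε x y : ℝ} (hε : 0 < ε) (hx : 0 ≤ x) (hy : 0 ≤ y)
    (hxM : x ≤ M) (hyM : y ≤ M) (hd : ε ≤ |x - y|) :
    (uu x + uu y) / 2 + Real.exp (-M) * (1 - Real.exp (-(ε/2))) ^ 2 / 2
      ≤ uu ((x + y) / 2) := by
  have key : Real.exp (-M) * (1 - Real.exp (-(ε/2))) ^ 2
      ≤ (Real.exp (-(x/2)) - Real.exp (-(y/2))) ^ 2 := by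
    -- WLOG via cases on sign of x - y
    have main : ∀ a b : ℝ, 0 ≤ a → a + ε ≤ b → b ≤ M →
        Real.exp (-M) * (1 - Real.exp (-(ε/2))) ^ 2
          ≤ (Real.exp (-(a/2)) - Real.exp (-(b/2))) ^ 2 := by
      intro a b ha hab hbM
      have h1 : Real.exp (-(a/2)) - Real.exp (-(b/2))
          = Real.exp (-(a/2)) * (1 - Real.exp (-((b - a)/2))) := by
        rw [mul_sub, mul_one, ← Real.exp_add]; ring_nf
      have h2 : Real.exp (-(M/2)) ≤ Real.exp (-(a/2)) := Real.exp_le_exp.2 (by linarith)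
      have h3 : Real.exp (-((b - a)/2)) ≤ Real.exp (-(ε/2)) := Real.exp_le_exp.2 (by linarith)
      have h4 : (0:ℝ) ≤ 1 - Real.exp (-(ε/2)) := by
        have : Real.exp (-(ε/2)) ≤ 1 := Real.exp_le_one_iff.2 (by linarith)
        linarith
      have h5 : Real.exp (-(M/2)) * (1 - Real.exp (-(ε/2)))
          ≤ Real.exp (-(a/2)) * (1 - Real.exp (-((b - a)/2))) := by
        have h6 : 1 - Real.exp (-(ε/2)) ≤ 1 - Real.exp (-((b - a)/2)) := by linarith
        have := Real.exp_pos (-(a/2))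
        nlinarith [Real.exp_pos (-(M/2))]
      have h7 : Real.exp (-(M/2)) ^ 2 = Real.exp (-M) := by
        rw [← Real.exp_nat_mul]; norm_num; congr 1; ring
      rw [h1]
      nlinarith [Real.exp_pos (-(M/2)), mul_nonneg (Real.exp_pos (-(M/2))).le h4]
    rcases abs_cases (x - y) with ⟨heq, _⟩ | ⟨heq, _⟩
    · have := main y x hy (by linarith) hxM
      nlinarith [this]
    · have := main x y hx (by linarith) hyM
      nlinarith [this]
  have := uu_midpoint hx hy
  nlinarith [this]



lemma min1_subadd {a b c : ℝ} (ha : 0 ≤ a) (hb : 0 ≤ b) (hc : c ≤ a + b) :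
    min 1 c ≤ min 1 a + min 1 b := by
  simp only [min_def]; split_ifs <;> linarith


lemma integrable_min_abs (f g : Ω →ₘ[P] ℝ) :
    Integrable (fun ω => min 1 |f ω - g ω|) P := by
  have hm : AEStronglyMeasurable (fun ω => min 1 |f ω - g ω|) P := by
    have := (f.aestronglyMeasurable.sub g.aestronglyMeasurable).norm
    simp only [Real.norm_eq_abs] at this
    exact aestronglyMeasurable_const.inf this
  refine Integrable.mono' (integrable_const 1) hm ?_
  filter_upwards with ω
  rw [Real.norm_eq_abs, abs_of_nonneg (le_min zero_le_one (abs_nonneg _))]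
  exact min_le_left _ _

omit [IsProbabilityMeasure P] in
lemma dist0_nonneg (f g : Ω →ₘ[P] ℝ) : 0 ≤ dist0 P f g :=
  integral_nonneg fun ω => le_min zero_le_one (abs_nonneg _)

omit [IsProbabilityMeasure P] in
lemma dist0_comm (f g : Ω →ₘ[P] ℝ) : dist0 P f g = dist0 P g f := by
  unfold dist0; congr 1; ext ω; rw [abs_sub_comm]

lemma dist0_triangle (f g h : Ω →ₘ[P] ℝ) :
    dist0 P f h ≤ dist0 P f g + dist0 P g h := by
  unfold dist0
  rw [← integral_add (integrable_min_abs P f g) (integrable_min_abs P g h)]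
  refine integral_mono (integrable_min_abs P f h)
    ((integrable_min_abs P f g).add (integrable_min_abs P g h)) fun ω => ?_
  exact min1_subadd (abs_nonneg _) (abs_nonneg _) (abs_sub_le _ _ _)

lemma markov0 (f g : Ω →ₘ[P] ℝ) {ε : ℝ} (hε : 0 < ε) :
    P {ω | ε ≤ |f ω - g ω|} ≤ ENNReal.ofReal (dist0 P f g / min 1 ε) := by
  set c : ℝ := min 1 ε with hc
  have hc0 : 0 < c := lt_min one_pos hε
  have hF : AEMeasurable (fun ω => ENNReal.ofReal (min 1 |f ω - g ω|)) P :=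
    ENNReal.measurable_ofReal.comp_aemeasurable (integrable_min_abs P f g).aemeasurable
  have hsub : {ω | ε ≤ |f ω - g ω|} ⊆
      {ω | ENNReal.ofReal c ≤ ENNReal.ofReal (min 1 |f ω - g ω|)} := by
    intro ω hω
    exact ENNReal.ofReal_le_ofReal (le_min (min_le_left _ _)
      (le_trans (min_le_right _ _) hω))
  have hkey := mul_meas_ge_le_lintegral₀ hF (ENNReal.ofReal c)
  have hlint : ∫⁻ ω, ENNReal.ofReal (min 1 |f ω - g ω|) ∂P = ENNReal.ofReal (dist0 P f g) := by
    rw [dist0, ← ofReal_integral_eq_lintegral_ofReal (integrable_min_abs P f g)]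
    filter_upwards with ω using le_min zero_le_one (abs_nonneg _)
  have h1 : P {ω | ε ≤ |f ω - g ω|} * ENNReal.ofReal c ≤ ENNReal.ofReal (dist0 P f g) := by
    rw [← hlint]
    calc P {ω | ε ≤ |f ω - g ω|} * ENNReal.ofReal c
        ≤ P {ω | ENNReal.ofReal c ≤ ENNReal.ofReal (min 1 |f ω - g ω|)} * ENNReal.ofReal c :=
          mul_le_mul_left (measure_mono hsub) _
      _ = ENNReal.ofReal c * P {ω | ENNReal.ofReal c ≤ ENNReal.ofReal (min 1 |f ω - g ω|)} :=
          mul_comm _ _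
      _ ≤ _ := hkey
  rw [ENNReal.ofReal_div_of_pos hc0]
  rw [ENNReal.le_div_iff_mul_le (Or.inl (by simp [hc0, ENNReal.ofReal_pos]))
    (Or.inl ENNReal.ofReal_ne_top)]
  exact h1

lemma tendstoInMeasure_of_dist0 {v : ℕ → Ω →ₘ[P] ℝ} {w : Ω →ₘ[P] ℝ}
    (h : Tendsto (fun n => dist0 P w (v n)) atTop (nhds 0)) :
    TendstoInMeasure P (fun n => (v n : Ω → ℝ)) atTop (w : Ω → ℝ) := by
  rw [tendstoInMeasure_iff_dist]
  intro ε hε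
  have hc0 : 0 < min 1 ε := lt_min one_pos hε
  have hb : ∀ n, P {ω | ε ≤ dist (v n ω) (w ω)} ≤
      ENNReal.ofReal (dist0 P (v n) w / min 1 ε) := by
    intro n
    have := markov0 P (v n) w hε
    simpa [Real.dist_eq] using this
  have htt : Tendsto (fun n => ENNReal.ofReal (dist0 P (v n) w / min 1 ε)) atTop (nhds 0) := by
    have h2 : Tendsto (fun n => dist0 P (v n) w / min 1 ε) atTop (nhds 0) := by
      simp only [dist0_comm P _ w]
      simpa using Tendsto.div_const h (min 1 ε)
    simpa using (ENNReal.tendsto_ofReal h2)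
  exact tendsto_of_tendsto_of_tendsto_of_le_of_le tendsto_const_nhds htt
    (fun n => zero_le) hb

lemma dist0_tendsto_of_ae {v : ℕ → Ω →ₘ[P] ℝ} {w : Ω →ₘ[P] ℝ}
    (h : ∀ᵐ ω ∂P, Tendsto (fun n => v n ω) atTop (nhds (w ω))) :
    Tendsto (fun n => dist0 P w (v n)) atTop (nhds 0) := by
  have : Tendsto (fun n => ∫ ω, min 1 |w ω - v n ω| ∂P) atTop (nhds (∫ (_ : Ω), (0:ℝ) ∂P)) := by
    refine tendsto_integral_of_dominated_convergence (fun _ => 1)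
      (fun n => (integrable_min_abs P w (v n)).1) (integrable_const 1) (fun n => ?_) ?_
    · filter_upwards with ω
      rw [Real.norm_eq_abs, abs_of_nonneg (le_min zero_le_one (abs_nonneg _))]
      exact min_le_left _ _
    · filter_upwards [h] with ω hω
      have hcont : Continuous fun x : ℝ => min 1 |w ω - x| := by
        exact continuous_const.min ((continuous_const.sub continuous_id).abs)
      have := (hcont.tendsto (w ω)).comp hω
      simpa [Function.comp_def] using this
  simpa [dist0] using this




omit [IsProbabilityMeasure P] in
lemma coeFn_finset_sum {ι : Type*} (t : Finset ι) (v : ι → Ω →ₘ[P] ℝ) :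
    ⇑(∑ i ∈ t, v i) =ᵐ[P] fun ω => ∑ i ∈ t, v i ω := by
  classical
  induction t using Finset.induction_on with
  | empty =>
    simp only [Finset.sum_empty]
    exact AEEqFun.coeFn_zero
  | insert a s hnot ih =>
    rw [Finset.sum_insert hnot]
    filter_upwards [AEEqFun.coeFn_add (v a) (∑ i ∈ s, v i), ih] with ω h1 h2
    simp only [Finset.sum_insert hnot, h1, Pi.add_apply, h2]

lemma exists_mem_closure0_seq {C : Set (Ω →ₘ[P] ℝ)} {f : Ω →ₘ[P] ℝ}
    (hf : f ∈ closure0 P C) :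
    ∃ v : ℕ → Ω →ₘ[P] ℝ, (∀ n, v n ∈ C) ∧ Tendsto (fun n => dist0 P f (v n)) atTop (nhds 0) := by
  have h : ∀ n : ℕ, ∃ g ∈ C, dist0 P f g < 1 / (n + 1) := fun n =>
    hf (1 / (n + 1)) (by positivity)
  choose v hvC hvd using h
  refine ⟨v, hvC, ?_⟩
  have h0 : Tendsto (fun n : ℕ => 1 / ((n : ℝ) + 1)) atTop (nhds 0) :=
    tendsto_one_div_add_atTop_nhds_zero_nat
  exact tendsto_of_tendsto_of_tendsto_of_le_of_le tendsto_const_nhds h0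
    (fun n => dist0_nonneg P _ _) (fun n => (hvd n).le)

/-- From an a.e.-pointwise-convergent sequence of `AEEqFun`s, construct the limit `AEEqFun`. -/
lemma exists_aeeqfun_limit {v : ℕ → Ω →ₘ[P] ℝ}
    (h : ∀ᵐ ω ∂P, ∃ l : ℝ, Tendsto (fun n => v n ω) atTop (nhds l)) :
    ∃ w : Ω →ₘ[P] ℝ, ∀ᵐ ω ∂P, Tendsto (fun n => v n ω) atTop (nhds (w ω)) := by
  obtain ⟨g, hgm, hg⟩ := exists_stronglyMeasurable_limit_of_tendsto_ae
    (f := fun n => ⇑(v n)) (fun n => (v n).aestronglyMeasurable) h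
  refine ⟨AEEqFun.mk g hgm.aestronglyMeasurable, ?_⟩
  filter_upwards [hg, AEEqFun.coeFn_mk g hgm.aestronglyMeasurable] with ω h1 h2
  rwa [h2]

noncomputable def JJ (k : Ω →ₘ[P] ℝ) : ℝ := ∫ ω, uu (k ω) ∂P

lemma integrable_uu (k : Ω →ₘ[P] ℝ) : Integrable (fun ω => uu (k ω)) P := by
  refine Integrable.mono' (integrable_const 1)
    (uu_continuous.comp_aestronglyMeasurable k.aestronglyMeasurable) ?_
  filter_upwards with ω
  rw [Real.norm_eq_abs, abs_of_nonneg (uu_nonneg _)]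
  exact uu_le_one _

lemma JJ_mono {k k' : Ω →ₘ[P] ℝ} (h : k ≤ k') : JJ P k ≤ JJ P k' := by
  refine integral_mono_ae (integrable_uu P k) (integrable_uu P k') ?_
  filter_upwards [AEEqFun.coeFn_le.2 h] with ω hω using uu_mono hω

lemma JJ_le_one (k : Ω →ₘ[P] ℝ) : JJ P k ≤ 1 := by
  calc JJ P k ≤ ∫ (_ : Ω), (1:ℝ) ∂P :=
        integral_mono (integrable_uu P k) (integrable_const 1) fun ω => uu_le_one _
    _ = 1 := by simp

lemma JJ_eq_of_le {k k' : Ω →ₘ[P] ℝ} (hk : 0 ≤ k) (hle : k ≤ k')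
    (hJ : JJ P k' ≤ JJ P k) : k = k' := by
  have hsub : ∫ ω, (uu (k' ω) - uu (k ω)) ∂P = 0 := by
    rw [integral_sub (integrable_uu P k') (integrable_uu P k)]
    have := JJ_mono P hle
    simp only [JJ] at this hJ ⊢
    linarith
  have hnn : 0 ≤ᵐ[P] fun ω => uu (k' ω) - uu (k ω) := by
    filter_upwards [AEEqFun.coeFn_le.2 hle] with ω hω
    simp [sub_nonneg, uu_mono hω]
  have h0 := (integral_eq_zero_iff_of_nonneg_ae hnn
    ((integrable_uu P k').sub (integrable_uu P k))).1 hsub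
  refine AEEqFun.ext ?_
  have hk0 : (0:Ω → ℝ) ≤ᵐ[P] k := by
    have := AEEqFun.coeFn_le.2 hk
    filter_upwards [this, AEEqFun.coeFn_zero (β := ℝ) (μ := P)] with ω h1 h2
    rw [h2] at h1; exact h1
  filter_upwards [h0, hk0, AEEqFun.coeFn_le.2 hle] with ω h1 h2 h3
  have : uu (k ω) = uu (k' ω) := by
    have : uu (k' ω) - uu (k ω) = 0 := h1
    linarith
  exact uu_inj_of_nonneg h2 (le_trans h2 h3) this

lemma closure0_nonneg {C : Set (Ω →ₘ[P] ℝ)} (hC : C ⊆ L0plus P) :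
    closure0 P C ⊆ L0plus P := by
  intro k hk
  obtain ⟨v, hvC, hvd⟩ := exists_mem_closure0_seq P hk
  obtain ⟨ns, _, hae⟩ := (tendstoInMeasure_of_dist0 P hvd).exists_seq_tendsto_ae
  have hnn : ∀ᵐ ω ∂P, ∀ n, 0 ≤ v (ns n) ω := by
    rw [MeasureTheory.ae_all_iff]
    intro n
    filter_upwards [AEEqFun.coeFn_le.2 (hC (hvC (ns n))), AEEqFun.coeFn_zero (β := ℝ) (μ := P)]
      with ω h1 h2
    rw [h2] at h1; exact h1
  have : (0 : Ω →ₘ[P] ℝ) ≤ k := by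
    rw [← AEEqFun.coeFn_le]
    filter_upwards [hae, hnn, AEEqFun.coeFn_zero (β := ℝ) (μ := P)] with ω h1 h2 h3
    rw [h3]
    exact ge_of_tendsto' h1 h2
  exact this

lemma mem_closure0_of_ae_tendsto {C : Set (Ω →ₘ[P] ℝ)} {v : ℕ → Ω →ₘ[P] ℝ} {w : Ω →ₘ[P] ℝ}
    (hv : ∀ n, v n ∈ C) (h : ∀ᵐ ω ∂P, Tendsto (fun n => v n ω) atTop (nhds (w ω))) :
    w ∈ closure0 P C := by
  intro ε hε
  have := dist0_tendsto_of_ae P h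
  rw [Metric.tendsto_atTop] at this
  obtain ⟨N, hN⟩ := this ε hε
  refine ⟨v N, hv N, ?_⟩
  have := hN N le_rfl
  rw [Real.dist_eq, sub_zero, abs_of_nonneg (dist0_nonneg P _ _)] at this
  exact this

lemma closure0_idem {C : Set (Ω →ₘ[P] ℝ)} :
    closure0 P (closure0 P C) ⊆ closure0 P C := by
  intro k hk ε hε
  obtain ⟨g, hg, hd⟩ := hk (ε / 2) (by linarith)
  obtain ⟨c, hc, hd'⟩ := hg (ε / 2) (by linarith)
  refine ⟨c, hc, lt_of_le_of_lt (dist0_triangle P k g c) (by linarith)⟩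

lemma meas_gt_closure {C : Set (Ω →ₘ[P] ℝ)} {k : Ω →ₘ[P] ℝ} (hk : k ∈ closure0 P C) (ℓ : ℝ) :
    P {ω | ℓ + 1 < k ω} ≤ ⨆ g ∈ C, P {ω | ℓ < g ω} := by
  refine ENNReal.le_of_forall_pos_le_add fun ε hε hfin => ?_
  obtain ⟨c, hc, hd⟩ := hk (min 1 ε) (lt_min one_pos hε)
  have hsub : {ω | ℓ + 1 < k ω} ⊆ {ω | ℓ < c ω} ∪ {ω | 1 ≤ |k ω - c ω|} := by
    intro ω hω
    simp only [Set.mem_setOf_eq] at hω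
    by_cases h1 : 1 ≤ |k ω - c ω|
    · exact Or.inr h1
    · push_neg at h1
      left
      have := abs_lt.1 h1
      simp only [Set.mem_setOf_eq]
      linarith [this.1]
  calc P {ω | ℓ + 1 < k ω} ≤ P ({ω | ℓ < c ω} ∪ {ω | 1 ≤ |k ω - c ω|}) := measure_mono hsub
    _ ≤ P {ω | ℓ < c ω} + P {ω | 1 ≤ |k ω - c ω|} := measure_union_le _ _
    _ ≤ (⨆ g ∈ C, P {ω | ℓ < g ω}) + ↑ε := by
        refine add_le_add (le_iSup₂ (f := fun g (_ : g ∈ C) => P {ω | ℓ < g ω}) c hc) ?_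
        calc P {ω | 1 ≤ |k ω - c ω|} ≤ ENNReal.ofReal (dist0 P k c / min 1 1) :=
              markov0 P k c one_pos
          _ ≤ ↑ε := by
              rw [min_self, div_one]
              calc ENNReal.ofReal (dist0 P k c) ≤ ENNReal.ofReal (min 1 ε) :=
                    ENNReal.ofReal_le_ofReal hd.le
                _ ≤ ↑ε := by
                    rw [← ENNReal.ofReal_coe_nnreal]
                    exact ENNReal.ofReal_le_ofReal (min_le_right _ _)

lemma bounded0_closure {C : Set (Ω →ₘ[P] ℝ)} (h : Bounded0 P C) :
    Bounded0 P (closure0 P C) := by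
  have hcomp : Tendsto (fun ℓ : ℝ => ⨆ g ∈ C, P {ω | (ℓ - 1) < g ω}) atTop (nhds 0) :=
    h.comp (tendsto_atTop_add_const_right atTop (-1) tendsto_id)
  refine tendsto_of_tendsto_of_tendsto_of_le_of_le tendsto_const_nhds hcomp
    (fun ℓ => zero_le) fun ℓ => ?_
  refine iSup₂_le fun k hk => ?_
  have := meas_gt_closure P hk (ℓ - 1)
  simpa using this

lemma JJ_nonneg (k : Ω →ₘ[P] ℝ) : 0 ≤ JJ P k :=
  integral_nonneg fun ω => uu_nonneg _

lemma ae_nonneg_of_L0plus {k : Ω →ₘ[P] ℝ} (hk : k ∈ L0plus P) :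
    ∀ᵐ ω ∂P, 0 ≤ k ω := by
  filter_upwards [AEEqFun.coeFn_le.2 hk, AEEqFun.coeFn_zero (β := ℝ) (μ := P)] with ω h1 h2
  rw [h2] at h1; exact h1

/-- Komlós-type step: the a.e. limit `f` of elements dominated by elements of `C`
is dominated by some element of the closure of `C`. -/
lemma komlos {C : Set (Ω →ₘ[P] ℝ)} (hCL0 : C ⊆ L0plus P) (hconv : Convex ℝ C)
    (hbdd : Bounded0 P C) {gseq fseq : ℕ → Ω →ₘ[P] ℝ} {f : Ω →ₘ[P] ℝ}
    (hgC : ∀ n, gseq n ∈ C) (hfg : ∀ n, fseq n ≤ gseq n)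
    (hft : ∀ᵐ ω ∂P, Tendsto (fun n => fseq n ω) atTop (nhds (f ω))) :
    ∃ h ∈ closure0 P C, f ≤ h := by
  classical
  set conv : ℕ → Set (Ω →ₘ[P] ℝ) := fun n => convexHull ℝ (gseq '' Set.Ici n) with hconvdef
  have hconvC : ∀ n, conv n ⊆ C := by
    intro n
    refine convexHull_min ?_ hconv
    rintro x ⟨m, _, rfl⟩
    exact hgC m
  have hconvmono : ∀ {m n : ℕ}, n ≤ m → conv m ⊆ conv n := fun {m n} h =>
    convexHull_mono (Set.image_mono (Set.Ici_subset_Ici.2 h))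
  have hconvne : ∀ n, (conv n).Nonempty := fun n =>
    ⟨gseq n, subset_convexHull ℝ _ (Set.mem_image_of_mem _ (Set.mem_Ici.2 le_rfl))⟩
  have hbddJ : ∀ n, BddAbove (JJ P '' conv n) := by
    intro n
    refine ⟨1, ?_⟩
    rintro x ⟨k, _, rfl⟩
    exact JJ_le_one P k
  set s : ℕ → ℝ := fun n => sSup (JJ P '' conv n) with hsdef
  have hs_anti : Antitone s := fun m n h =>
    csSup_le_csSup (hbddJ m) ((hconvne n).image _) (Set.image_mono (hconvmono h))
  have hs_lb : ∀ n, 0 ≤ s n := fun n =>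
    le_csSup_of_le (hbddJ n) (Set.mem_image_of_mem _ (hconvne n).some_mem)
      (JJ_nonneg P _)
  set sinf : ℝ := ⨅ n, s n with hsinfdef
  have hs_tendsto : Tendsto s atTop (nhds sinf) :=
    tendsto_atTop_ciInf hs_anti ⟨0, fun x ⟨n, hn⟩ => hn ▸ hs_lb n⟩
  have hsinf_le : ∀ n, sinf ≤ s n := fun n =>
    ciInf_le ⟨0, fun x ⟨m, hm⟩ => hm ▸ hs_lb m⟩ n
  -- choose near-optimizers
  have hex : ∀ n : ℕ, ∃ k ∈ conv n, s n - 1 / (n + 1) < JJ P k := by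
    intro n
    obtain ⟨x, ⟨k, hk, rfl⟩, hx⟩ := exists_lt_of_lt_csSup ((hconvne n).image _)
      (by have : (0:ℝ) < 1 / (n+1) := by positivity
          linarith : s n - 1 / (n+1) < s n)
    exact ⟨k, hk, hx⟩
  choose hseq hseqconv hseqJ using hex
  have hseqC : ∀ n, hseq n ∈ C := fun n => hconvC n (hseqconv n)
  have hJle : ∀ {N n : ℕ}, N ≤ n → sinf - 1 / (N + 1) ≤ JJ P (hseq n) := by
    intro N n h
    have h1 : (1:ℝ) / (n+1) ≤ 1 / (N+1) := by
      apply one_div_le_one_div_of_le (by positivity)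
      exact_mod_cast by omega
    have := hseqJ n
    have := hsinf_le n
    linarith
  -- Cauchy in probability
  have hcauchy : ∀ ε δ : ℝ, 0 < ε → 0 < δ → ∃ N : ℕ, ∀ m n : ℕ, N ≤ m → N ≤ n →
      P {ω | ε ≤ |hseq m ω - hseq n ω|} ≤ ENNReal.ofReal δ := by
    intro ε δ hε hδ
    -- choose truncation level M
    have hδ3 : (0:ℝ) < δ / 3 := by linarith
    have hM : ∃ M : ℝ, (⨆ g ∈ C, P {ω | M < g ω}) < ENNReal.ofReal (δ / 3) := by
      have := hbdd.eventually_lt_const (by simp [ENNReal.ofReal_pos, hδ3] :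
        (0 : ENNReal) < ENNReal.ofReal (δ / 3))
      exact this.exists
    obtain ⟨M, hMlt⟩ := hM
    set η : ℝ := Real.exp (-M) * (1 - Real.exp (-(ε/2))) ^ 2 / 2 with hηdef
    have hη : 0 < η := by
      have h1 : Real.exp (-(ε/2)) < 1 := Real.exp_lt_one_iff.2 (by linarith)
      have h2 : (0:ℝ) < Real.exp (-M) := Real.exp_pos _
      have h3 : (0:ℝ) < (1 - Real.exp (-(ε/2))) ^ 2 := by nlinarith
      exact div_pos (mul_pos h2 h3) two_pos
    -- choose N
    have htail : Tendsto (fun N : ℕ => s N - sinf + 1 / (N + 1)) atTop (nhds 0) := by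
      have h1 : Tendsto (fun N : ℕ => s N - sinf) atTop (nhds 0) := by
        simpa using hs_tendsto.sub_const sinf
      have h2 : Tendsto (fun N : ℕ => (1:ℝ) / (N + 1)) atTop (nhds 0) :=
        tendsto_one_div_add_atTop_nhds_zero_nat
      simpa using h1.add h2
    have hNex : ∃ N : ℕ, s N - sinf + 1 / (N + 1) < η * (δ / 3) := by
      have := htail.eventually_lt_const (by positivity : (0:ℝ) < η * (δ / 3))
      exact this.exists
    obtain ⟨N, hN⟩ := hNex
    refine ⟨N, fun m n hm hn => ?_⟩
    set B : Set Ω := {ω | ε ≤ |hseq m ω - hseq n ω| ∧ hseq m ω ≤ M ∧ hseq n ω ≤ M} with hBdef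
    set q : Ω →ₘ[P] ℝ := (1/2 : ℝ) • hseq m + (1/2 : ℝ) • hseq n with hqdef
    have hqconv : q ∈ conv N := by
      refine (convex_convexHull ℝ _) (hconvmono hm (hseqconv m)) (hconvmono hn (hseqconv n))
        (by norm_num) (by norm_num) (by norm_num)
    have hqcoe : ∀ᵐ ω ∂P, q ω = (hseq m ω + hseq n ω) / 2 := by
      filter_upwards [AEEqFun.coeFn_add ((1/2 : ℝ) • hseq m) ((1/2 : ℝ) • hseq n),
        AEEqFun.coeFn_smul (1/2 : ℝ) (hseq m), AEEqFun.coeFn_smul (1/2 : ℝ) (hseq n)]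
        with ω h1 h2 h3
      rw [hqdef]
      simp only [h1, Pi.add_apply, h2, h3, Pi.smul_apply, smul_eq_mul]
      ring
    set G : Ω → ℝ := fun ω => uu (q ω) - (uu (hseq m ω) + uu (hseq n ω)) / 2 with hGdef
    have hGint : Integrable G P :=
      (integrable_uu P q).sub (((integrable_uu P (hseq m)).add
        (integrable_uu P (hseq n))).div_const 2)
    have hGnn : 0 ≤ᵐ[P] G := by
      filter_upwards [hqcoe, ae_nonneg_of_L0plus P (hCL0 (hseqC m)),
        ae_nonneg_of_L0plus P (hCL0 (hseqC n))] with ω h1 h2 h3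
      have := uu_midpoint h2 h3
      have hsq : (0:ℝ) ≤ (Real.exp (-(hseq m ω/2)) - Real.exp (-(hseq n ω/2))) ^ 2 / 2 := by
        positivity
      simp only [hGdef, Pi.zero_apply, h1]
      linarith
    have hGB : ∀ᵐ ω ∂P, ω ∈ B → η ≤ G ω := by
      filter_upwards [hqcoe, ae_nonneg_of_L0plus P (hCL0 (hseqC m)),
        ae_nonneg_of_L0plus P (hCL0 (hseqC n))] with ω h1 h2 h3 hB
      obtain ⟨hd, hm1, hn1⟩ := hB
      have := uu_midpoint_quant hε h2 h3 hm1 hn1 hd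
      simp only [hGdef, h1]
      rw [hηdef]
      linarith
    -- integral bound
    have hJq : JJ P q ≤ s N := le_csSup (hbddJ N) (Set.mem_image_of_mem _ hqconv)
    have hintG : ∫ ω, G ω ∂P ≤ s N - sinf + 1 / (N + 1) := by
      have heq : ∫ ω, G ω ∂P = JJ P q - (JJ P (hseq m) + JJ P (hseq n)) / 2 := by
        have h2 : Integrable (fun ω => (uu (hseq m ω) + uu (hseq n ω)) / 2) P :=
          ((integrable_uu P (hseq m)).add (integrable_uu P (hseq n))).div_const 2
        rw [hGdef]
        rw [integral_sub (integrable_uu P q) h2]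
        rw [integral_div, integral_add (integrable_uu P (hseq m)) (integrable_uu P (hseq n))]
        rfl
      have h1 := hJle hm
      have h2 := hJle hn
      rw [heq]
      linarith
    -- measure of B
    have hPB : P B ≤ ENNReal.ofReal (δ / 3) := by
      have hmono : P B ≤ P {ω | ENNReal.ofReal η ≤ ENNReal.ofReal (G ω)} := by
        refine measure_mono_ae ?_
        filter_upwards [hGB] with ω hω hB
        exact ENNReal.ofReal_le_ofReal (hω hB)
      have hGae : AEMeasurable (fun ω => ENNReal.ofReal (G ω)) P :=
        ENNReal.measurable_ofReal.comp_aemeasurable hGint.aemeasurable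
      have hkey := mul_meas_ge_le_lintegral₀ hGae (ENNReal.ofReal η)
      have hlG : ∫⁻ ω, ENNReal.ofReal (G ω) ∂P = ENNReal.ofReal (∫ ω, G ω ∂P) :=
        (ofReal_integral_eq_lintegral_ofReal hGint hGnn).symm
      have hchain : ENNReal.ofReal η * P B ≤ ENNReal.ofReal η * ENNReal.ofReal (δ / 3) := by
        calc ENNReal.ofReal η * P B
            ≤ ENNReal.ofReal η * P {ω | ENNReal.ofReal η ≤ ENNReal.ofReal (G ω)} :=
              mul_le_mul_right hmono _
          _ ≤ ∫⁻ ω, ENNReal.ofReal (G ω) ∂P := hkey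
          _ = ENNReal.ofReal (∫ ω, G ω ∂P) := hlG
          _ ≤ ENNReal.ofReal (η * (δ / 3)) :=
              ENNReal.ofReal_le_ofReal (le_trans hintG hN.le)
          _ = ENNReal.ofReal η * ENNReal.ofReal (δ / 3) :=
              ENNReal.ofReal_mul hη.le
      exact (ENNReal.mul_le_mul_iff_right (by simp [ENNReal.ofReal_pos, hη])
        ENNReal.ofReal_ne_top).1 hchain
    -- assemble
    have hsub : {ω | ε ≤ |hseq m ω - hseq n ω|} ⊆
        B ∪ ({ω | M < hseq m ω} ∪ {ω | M < hseq n ω}) := by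
      intro ω hω
      by_cases h1 : hseq m ω ≤ M
      · by_cases h2 : hseq n ω ≤ M
        · exact Or.inl ⟨hω, h1, h2⟩
        · exact Or.inr (Or.inr (by simpa using not_le.1 h2))
      · exact Or.inr (Or.inl (by simpa using not_le.1 h1))
    have hCb : ∀ k ∈ C, P {ω | M < k ω} ≤ ENNReal.ofReal (δ / 3) := fun k hk =>
      le_trans (le_iSup₂ (f := fun g (_ : g ∈ C) => P {ω | M < g ω}) k hk) hMlt.le
    calc P {ω | ε ≤ |hseq m ω - hseq n ω|}
        ≤ P B + (P {ω | M < hseq m ω} + P {ω | M < hseq n ω}) := by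
          refine le_trans (measure_mono hsub) ?_
          refine le_trans (measure_union_le _ _) ?_
          exact add_le_add le_rfl (measure_union_le _ _)
      _ ≤ ENNReal.ofReal (δ / 3) + (ENNReal.ofReal (δ / 3) + ENNReal.ofReal (δ / 3)) :=
          add_le_add hPB (add_le_add (hCb _ (hseqC m)) (hCb _ (hseqC n)))
      _ = ENNReal.ofReal δ := by
          rw [← ENNReal.ofReal_add hδ3.le hδ3.le, ← ENNReal.ofReal_add hδ3.le (by linarith)]
          congr 1
          ring
  -- extract an a.e. convergent subsequence via Borel-Cantelli
  have hNkex : ∀ k : ℕ, ∃ N : ℕ, ∀ m n : ℕ, N ≤ m → N ≤ n →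
      P {ω | (1/2:ℝ)^k ≤ |hseq m ω - hseq n ω|} ≤ ENNReal.ofReal ((1/2:ℝ)^k) :=
    fun k => hcauchy ((1/2:ℝ)^k) ((1/2:ℝ)^k) (by positivity) (by positivity)
  choose Nk hNk using hNkex
  set φ : ℕ → ℕ := fun k => Nat.rec (Nk 0) (fun k ih => max (Nk (k+1)) (ih + 1)) k with hφdef
  have hφsucc : ∀ k, φ (k+1) = max (Nk (k+1)) (φ k + 1) := fun k => rfl
  have hφmono : StrictMono φ := strictMono_nat_of_lt_succ fun k => by
    rw [hφsucc]; exact lt_of_lt_of_le (Nat.lt_succ_self _) (le_max_right _ _)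
  have hφge : ∀ k, Nk k ≤ φ k := by
    intro k
    cases k with
    | zero => exact le_rfl
    | succ k => rw [hφsucc]; exact le_max_left _ _
  set E : ℕ → Set Ω := fun k => {ω | (1/2:ℝ)^k ≤ |hseq (φ k) ω - hseq (φ (k+1)) ω|} with hEdef
  have hE : ∀ k, P (E k) ≤ ENNReal.ofReal ((1/2:ℝ)^k) := fun k =>
    hNk k (φ k) (φ (k+1)) (hφge k) (le_trans (hφge k) (hφmono (Nat.lt_succ_self k)).le)
  have hhalf : ENNReal.ofReal ((1/2:ℝ)) = 2⁻¹ := by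
    rw [one_div, ENNReal.ofReal_inv_of_pos two_pos]
    norm_num
  have hsum : ∑' k, P (E k) ≠ ⊤ := by
    have hle : ∀ k, P (E k) ≤ (2⁻¹ : ENNReal) ^ k := by
      intro k
      refine le_trans (hE k) ?_
      rw [ENNReal.ofReal_pow (by norm_num : (0:ℝ) ≤ 1/2), hhalf]
    refine ne_top_of_le_ne_top ?_ (ENNReal.tsum_le_tsum hle)
    simpa only [ENNReal.tsum_geometric, ENNReal.one_sub_inv_two, inv_inv] using ENNReal.ofNat_ne_top
  have hlimsup0 := measure_limsup_atTop_eq_zero hsum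
  have haeC : ∀ᵐ ω ∂P, ∃ l : ℝ, Tendsto (fun k => hseq (φ k) ω) atTop (nhds l) := by
    have h1 : ∀ᵐ ω ∂P, ω ∉ limsup E atTop := by
      rw [ae_iff]
      simpa using hlimsup0
    filter_upwards [h1] with ω hω
    rw [mem_limsup_iff_frequently_mem, Filter.not_frequently] at hω
    obtain ⟨K, hK⟩ := eventually_atTop.1 hω
    set a : ℕ → ℝ := fun k => hseq (φ k) ω with hadef
    have hdist : ∀ j : ℕ, dist (a (K + j)) (a (K + j + 1)) ≤ (1/2:ℝ)^K * (1/2)^j := by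
      intro j
      have h2 := hK (K + j) (Nat.le_add_right _ _)
      simp only [hEdef, Set.mem_setOf_eq, not_le] at h2
      rw [Real.dist_eq]
      calc |a (K + j) - a (K + j + 1)| ≤ (1/2:ℝ)^(K + j) := h2.le
        _ = (1/2:ℝ)^K * (1/2)^j := pow_add _ _ _
    have hcau : CauchySeq (fun j => a (K + j)) :=
      cauchySeq_of_dist_le_of_summable _ hdist (summable_geometric_two.mul_left _)
    obtain ⟨l, hl⟩ := cauchySeq_tendsto_of_complete hcau
    refine ⟨l, ?_⟩
    have hl' : Tendsto (fun j => a (j + K)) atTop (nhds l) := by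
      have : (fun j => a (j + K)) = fun j => a (K + j) := by
        funext j; rw [add_comm]
      rw [this]; exact hl
    exact (tendsto_add_atTop_iff_nat K).1 hl'
  obtain ⟨hlim, hlimae⟩ := exists_aeeqfun_limit P haeC
  have hlimcl : hlim ∈ closure0 P C :=
    mem_closure0_of_ae_tendsto P (fun k => hseqC (φ k)) hlimae
  refine ⟨hlim, hlimcl, ?_⟩
  -- dominating convex combinations on the `fseq` side
  have hdom : ∀ k : ℕ, ∃ ft : Ω →ₘ[P] ℝ, ft ≤ hseq (φ k) ∧
      ∀ᵐ ω ∂P, ∀ ρ : ℝ, 0 < ρ → (∀ j, φ k ≤ j → |fseq j ω - f ω| ≤ ρ) →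
        |ft ω - f ω| ≤ ρ := by
    intro k
    have hmem : hseq (φ k) ∈ convexHull ℝ (gseq '' Set.Ici (φ k)) := hseqconv (φ k)
    rw [convexHull_eq] at hmem
    obtain ⟨ι, t, wgt, z, hw0, hw1, hz, hcm⟩ := hmem
    have hidxex : ∀ i : ι, ∃ j : ℕ, i ∈ t → (φ k ≤ j ∧ gseq j = z i) := by
      intro i
      by_cases hi : i ∈ t
      · obtain ⟨j, hj1, hj2⟩ := hz i hi
        exact ⟨j, fun _ => ⟨hj1, hj2⟩⟩
      · exact ⟨0, fun h => absurd h hi⟩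
    choose idx hidx using hidxex
    have hsm1 : ∀ᵐ ω ∂P, ∀ i ∈ t, (wgt i • fseq (idx i)) ω = wgt i * fseq (idx i) ω := by
      rw [Filter.eventually_all_finset]
      intro i _
      filter_upwards [AEEqFun.coeFn_smul (wgt i) (fseq (idx i))] with ω hω
      rw [hω]; rfl
    have hsm2 : ∀ᵐ ω ∂P, ∀ i ∈ t, (wgt i • gseq (idx i)) ω = wgt i * gseq (idx i) ω := by
      rw [Filter.eventually_all_finset]
      intro i _
      filter_upwards [AEEqFun.coeFn_smul (wgt i) (gseq (idx i))] with ω hω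
      rw [hω]; rfl
    refine ⟨∑ i ∈ t, wgt i • fseq (idx i), ?_, ?_⟩
    · have hcm' : hseq (φ k) = ∑ i ∈ t, wgt i • gseq (idx i) := by
        rw [← hcm, Finset.centerMass_eq_of_sum_1 _ _ hw1]
        exact Finset.sum_congr rfl fun i hi => by rw [(hidx i hi).2]
      rw [hcm', ← AEEqFun.coeFn_le]
      have hfg' : ∀ᵐ ω ∂P, ∀ j : ℕ, fseq j ω ≤ gseq j ω := by
        rw [MeasureTheory.ae_all_iff]
        exact fun j => AEEqFun.coeFn_le.2 (hfg j)
      filter_upwards [coeFn_finset_sum P t (fun i => wgt i • fseq (idx i)),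
        coeFn_finset_sum P t (fun i => wgt i • gseq (idx i)), hsm1, hsm2, hfg']
        with ω e1 e2 e3 e4 hle
      rw [e1, e2]
      refine Finset.sum_le_sum fun i hi => ?_
      rw [e3 i hi, e4 i hi]
      exact mul_le_mul_of_nonneg_left (hle (idx i)) (hw0 i hi)
    · filter_upwards [coeFn_finset_sum P t (fun i => wgt i • fseq (idx i)), hsm1]
        with ω e1 e3
      intro ρ hρ hbd
      rw [e1]
      have heq : (∑ i ∈ t, (wgt i • fseq (idx i)) ω) - f ω
          = ∑ i ∈ t, wgt i * (fseq (idx i) ω - f ω) := by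
        rw [Finset.sum_congr rfl e3]
        rw [Finset.sum_congr rfl (fun i _ => mul_sub (wgt i) (fseq (idx i) ω) (f ω))]
        rw [Finset.sum_sub_distrib, ← Finset.sum_mul, hw1, one_mul]
      rw [heq]
      calc |∑ i ∈ t, wgt i * (fseq (idx i) ω - f ω)|
          ≤ ∑ i ∈ t, |wgt i * (fseq (idx i) ω - f ω)| := Finset.abs_sum_le_sum_abs _ _
        _ ≤ ∑ i ∈ t, wgt i * ρ := by
            refine Finset.sum_le_sum fun i hi => ?_
            rw [abs_mul, abs_of_nonneg (hw0 i hi)]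
            exact mul_le_mul_of_nonneg_left (hbd (idx i) (hidx i hi).1) (hw0 i hi)
        _ = ρ := by rw [← Finset.sum_mul, hw1, one_mul]
  choose ft hft1 hft2 using hdom
  rw [← AEEqFun.coeFn_le]
  have hft1' : ∀ᵐ ω ∂P, ∀ k, ft k ω ≤ hseq (φ k) ω := by
    rw [MeasureTheory.ae_all_iff]
    exact fun k => AEEqFun.coeFn_le.2 (hft1 k)
  have hft2' : ∀ᵐ ω ∂P, ∀ k, ∀ ρ : ℝ, 0 < ρ →
      (∀ j, φ k ≤ j → |fseq j ω - f ω| ≤ ρ) → |ft k ω - f ω| ≤ ρ :=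
    MeasureTheory.ae_all_iff.2 hft2
  filter_upwards [hft, hlimae, hft1', hft2'] with ω h1 h2 h3 h4
  by_contra hlt
  push_neg at hlt
  set ρ : ℝ := (f ω - hlim ω) / 2 with hρdef
  have hρ : 0 < ρ := by simp only [hρdef]; linarith
  obtain ⟨N, hN⟩ := (Metric.tendsto_atTop.1 h1) ρ hρ
  have hev : ∀ k, N ≤ k → f ω - ρ ≤ hseq (φ k) ω := by
    intro k hk
    have hbd : ∀ j, φ k ≤ j → |fseq j ω - f ω| ≤ ρ := by
      intro j hj
      have : N ≤ j := le_trans hk (le_trans hφmono.le_apply hj)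
      have := hN j this
      rw [Real.dist_eq] at this
      exact this.le
    have h5 := h4 k ρ hρ hbd
    have h6 := abs_le.1 h5
    have := h3 k
    linarith [h6.1]
  have hle : f ω - ρ ≤ hlim ω :=
    ge_of_tendsto h2 (eventually_atTop.2 ⟨N, hev⟩)
  simp only [hρdef] at hle
  linarith

/-- Every element of the closure of a bounded set that lies below some maximal
chain structure admits a maximal element above it (Zorn). -/
lemma exists_maximal_above {C : Set (Ω →ₘ[P] ℝ)} (hCL0 : C ⊆ L0plus P)
    (hbdd : Bounded0 P C) {h : Ω →ₘ[P] ℝ} (hh : h ∈ closure0 P C) :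
    ∃ m, h ≤ m ∧ m ∈ closure0 P C ∧ ∀ z ∈ closure0 P C, m ≤ z → m = z := by
  classical
  have hclnn : closure0 P C ⊆ L0plus P := closure0_nonneg P hCL0
  have hbcl : Tendsto (fun ℓ : ℝ => ⨆ g ∈ C, P {ω | ℓ < g ω}) atTop (nhds 0) := hbdd
  have main : ∀ c ⊆ closure0 P C, IsChain (· ≤ ·) c → ∀ y ∈ c,
      ∃ ub ∈ closure0 P C, ∀ z ∈ c, z ≤ ub := by
    intro c hcsub hchain y hy
    have hne : (JJ P '' c).Nonempty := ⟨JJ P y, Set.mem_image_of_mem _ hy⟩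
    have hbddJ : BddAbove (JJ P '' c) := ⟨1, by rintro x ⟨k, _, rfl⟩; exact JJ_le_one P k⟩
    set β : ℝ := sSup (JJ P '' c) with hβdef
    have hex : ∀ n : ℕ, ∃ k ∈ c, β - 1 / (n + 1) < JJ P k := by
      intro n
      obtain ⟨x, ⟨k, hk, rfl⟩, hx⟩ := exists_lt_of_lt_csSup hne
        (by have : (0:ℝ) < 1 / (n+1) := by positivity
            linarith : β - 1 / (n+1) < β)
      exact ⟨k, hk, hx⟩
    choose k hkc hkJ using hex
    -- monotone recursion
    set k' : ℕ → Ω →ₘ[P] ℝ := fun n => Nat.rec (k 0)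
      (fun n ih => if ih ≤ k (n+1) then k (n+1) else ih) n with hk'def
    have hk'succ : ∀ n, k' (n+1) = if k' n ≤ k (n+1) then k (n+1) else k' n := fun n => rfl
    have hk'c : ∀ n, k' n ∈ c := by
      intro n
      induction n with
      | zero => exact hkc 0
      | succ n ih => rw [hk'succ]; split <;> [exact hkc (n+1); exact ih]
    have hk'mono : ∀ n, k' n ≤ k' (n+1) := by
      intro n
      rw [hk'succ]
      split
      · assumption
      · exact le_rfl
    have hk'ge : ∀ n, k n ≤ k' n := by
      intro n
      cases n with
      | zero => exact le_rfl
      | succ n =>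
        rw [hk'succ]
        split
        · exact le_rfl
        · rcases hchain.total (hkc (n+1)) (hk'c n) with h1 | h1
          · exact h1
          · exact absurd h1 (by assumption)
    have hk'mono' : ∀ {m n : ℕ}, m ≤ n → k' m ≤ k' n := by
      intro m n hmn
      exact monotone_nat_of_le_succ hk'mono hmn
    have hk'J : ∀ n, β - 1 / (n + 1) < JJ P (k' n) := fun n =>
      lt_of_lt_of_le (hkJ n) (JJ_mono P (hk'ge n))
    -- a.e. monotone
    have haemono : ∀ᵐ ω ∂P, ∀ n, k' n ω ≤ k' (n+1) ω := by
      rw [MeasureTheory.ae_all_iff]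
      exact fun n => AEEqFun.coeFn_le.2 (hk'mono n)
    -- a.e. bounded above (no divergence)
    set D : Set Ω := {ω | ∀ L : ℕ, ∃ n, (L:ℝ) < k' n ω} with hDdef
    have hPD : P D = 0 := by
      have hDle : ∀ ℓ : ℝ, P D ≤ ⨆ g ∈ C, P {ω | ℓ < g ω} := by
        intro ℓ
        set F : ℕ → Set Ω := fun n => {ω | ℓ + 1 < k' n ω} with hFdef
        have hsubD : D ⊆ ⋃ n, F n := by
          intro ω hω
          obtain ⟨n, hn⟩ := hω (⌈ℓ⌉₊ + 2)
          refine Set.mem_iUnion.2 ⟨n, ?_⟩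
          have h1 : ℓ ≤ (⌈ℓ⌉₊ : ℝ) := Nat.le_ceil ℓ
          have h2 : ((⌈ℓ⌉₊ + 2 : ℕ) : ℝ) = (⌈ℓ⌉₊ : ℝ) + 2 := by push_cast; ring
          simp only [hFdef, Set.mem_setOf_eq]
          rw [h2] at hn
          linarith
        have hacc : ∀ n, P (Set.accumulate F n) ≤ P (F n) := by
          intro n
          refine measure_mono_ae ?_
          filter_upwards [haemono] with ω hω hacc
          obtain ⟨m, hm, hmem⟩ := Set.mem_accumulate.1 hacc
          have h5 : k' m ω ≤ k' n ω := monotone_nat_of_le_succ (fun j => hω j) hm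
          simp only [hFdef, Set.mem_setOf_eq] at hmem
          show ω ∈ F n
          simp only [hFdef, Set.mem_setOf_eq]
          exact lt_of_lt_of_le hmem h5
        calc P D ≤ P (⋃ n, F n) := measure_mono hsubD
          _ = ⨆ n, P (Set.accumulate F n) := measure_iUnion_eq_iSup_accumulate
          _ ≤ ⨆ g ∈ C, P {ω | ℓ < g ω} := by
              refine iSup_le fun n => le_trans (hacc n) ?_
              exact meas_gt_closure P (hcsub (hk'c n)) ℓ
      have := ge_of_tendsto hbcl (Filter.Eventually.of_forall hDle)
      exact le_antisymm this zero_le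
    -- a.e. convergence
    have haeconv : ∀ᵐ ω ∂P, ∃ l : ℝ, Tendsto (fun n => k' n ω) atTop (nhds l) := by
      have hDc : ∀ᵐ ω ∂P, ω ∉ D := by
        rw [ae_iff]; simpa using hPD
      filter_upwards [haemono, hDc] with ω h1 h2
      simp only [hDdef, Set.mem_setOf_eq, not_forall, not_exists, not_lt] at h2
      obtain ⟨L, hL⟩ := h2
      have hmono : Monotone fun n => k' n ω := monotone_nat_of_le_succ h1
      refine ⟨⨆ n, k' n ω, tendsto_atTop_ciSup hmono ⟨L, ?_⟩⟩
      rintro x ⟨n, rfl⟩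
      exact hL n
    obtain ⟨w, hw⟩ := exists_aeeqfun_limit P haeconv
    have hwcl : w ∈ closure0 P C :=
      closure0_idem P (mem_closure0_of_ae_tendsto P (fun n => hcsub (hk'c n)) hw)
    have hk'le : ∀ n, k' n ≤ w := by
      intro n
      rw [← AEEqFun.coeFn_le]
      filter_upwards [hw, haemono] with ω h1 h2
      refine ge_of_tendsto h1 (eventually_atTop.2 ⟨n, fun m hm => ?_⟩)
      exact monotone_nat_of_le_succ h2 hm
    have hJw : β ≤ JJ P w := by
      have h1 : ∀ n : ℕ, β - 1 / (n + 1) ≤ JJ P w := fun n =>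
        le_trans (hk'J n).le (JJ_mono P (hk'le n))
      have h2 : Tendsto (fun n : ℕ => β - 1 / (n + 1)) atTop (nhds β) := by
        have := tendsto_one_div_add_atTop_nhds_zero_nat (𝕜 := ℝ)
        simpa using (tendsto_const_nhds (x := β)).sub this
      exact le_of_tendsto h2 (Filter.Eventually.of_forall h1)
    refine ⟨w, hwcl, fun z hz => ?_⟩
    by_cases hcase : ∃ n, z ≤ k' n
    · obtain ⟨n, hn⟩ := hcase
      exact le_trans hn (hk'le n)
    · push_neg at hcase
      have hzk : ∀ n, k' n ≤ z := by
        intro n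
        rcases hchain.total hz (hk'c n) with h1 | h1
        · exact absurd h1 (hcase n)
        · exact h1
      have hwz : w ≤ z := by
        rw [← AEEqFun.coeFn_le]
        have hzk' : ∀ᵐ ω ∂P, ∀ n, k' n ω ≤ z ω := by
          rw [MeasureTheory.ae_all_iff]
          exact fun n => AEEqFun.coeFn_le.2 (hzk n)
        filter_upwards [hw, hzk'] with ω h1 h2
        exact le_of_tendsto h1 (Filter.Eventually.of_forall h2)
      have hJz : JJ P z ≤ JJ P w :=
        le_trans (le_csSup hbddJ (Set.mem_image_of_mem _ hz)) hJw
      have := JJ_eq_of_le P (hclnn hwcl) hwz hJz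
      rw [← this]
  obtain ⟨m, hm1, hm2⟩ := zorn_le_nonempty₀ (closure0 P C) main h hh
  exact ⟨m, hm1, hm2.1, fun z hz hmz => le_antisymm hmz (hm2.2 hz hmz)⟩

lemma smul_add_le_smul_add {a b : ℝ} (ha : 0 ≤ a) (hb : 0 ≤ b)
    {x y gx gy : Ω →ₘ[P] ℝ} (h1 : x ≤ gx) (h2 : y ≤ gy) :
    a • x + b • y ≤ a • gx + b • gy := by
  rw [← AEEqFun.coeFn_le]
  filter_upwards [AEEqFun.coeFn_add (a • x) (b • y), AEEqFun.coeFn_add (a • gx) (b • gy),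
    AEEqFun.coeFn_smul a x, AEEqFun.coeFn_smul b y, AEEqFun.coeFn_smul a gx,
    AEEqFun.coeFn_smul b gy, AEEqFun.coeFn_le.2 h1, AEEqFun.coeFn_le.2 h2]
    with ω e1 e2 e3 e4 e5 e6 l1 l2
  simp only [e1, e2, Pi.add_apply, e3, e4, e5, e6, Pi.smul_apply, smul_eq_mul]
  exact add_le_add (mul_le_mul_of_nonneg_left l1 ha) (mul_le_mul_of_nonneg_left l2 hb)

end Lemmas

/-- If `C ⊆ L⁰₊` is convex, max-closed and bounded, then its solid hull
`S = {f ∈ L⁰₊ : f ≤ g a.s. for some g ∈ C}` is solid, convex, closed (in the topology of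
convergence in probability) and bounded. -/
theorem statement6 {Ω : Type*} [MeasurableSpace Ω] (P : Measure Ω) [IsProbabilityMeasure P]
    (C : Set (Ω →ₘ[P] ℝ)) (hCL0 : C ⊆ L0plus P)
    (hconv : Convex ℝ C) (hmaxcl : MaxClosed P C) (hbdd : Bounded0 P C) :
    Solid P (solidHull P C) ∧ Convex ℝ (solidHull P C) ∧
      IsClosed0 P (solidHull P C) ∧ Bounded0 P (solidHull P C) := by
  classical
  refine ⟨?_, ?_, ?_, ?_⟩
  · -- Solid
    rintro g ⟨hgL0, c, hcC, hgc⟩ f hf0 hfg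
    exact ⟨hf0, c, hcC, le_trans hfg hgc⟩
  · -- Convex
    rintro x ⟨hxL0, gx, hgxC, hxg⟩ y ⟨hyL0, gy, hgyC, hyg⟩ a b ha hb hab
    refine ⟨?_, a • gx + b • gy, hconv hgxC hgyC ha hb hab, ?_⟩
    · have := smul_add_le_smul_add P ha hb hxL0 hyL0
      rw [smul_zero, smul_zero, add_zero] at this
      exact this
    · exact smul_add_le_smul_add P ha hb hxg hyg
  · -- Closed
    intro f hf
    obtain ⟨v, hvS, hvd⟩ := exists_mem_closure0_seq P hf
    have hvL0 : ∀ n, v n ∈ L0plus P := fun n => (hvS n).1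
    have hex : ∀ n, ∃ g ∈ C, v n ≤ g := fun n => (hvS n).2
    choose g hgC hvg using hex
    obtain ⟨ns, hnsmono, hae⟩ := (tendstoInMeasure_of_dist0 P hvd).exists_seq_tendsto_ae
    obtain ⟨h, hhcl, hfh⟩ := komlos P hCL0 hconv hbdd
      (gseq := fun n => g (ns n)) (fseq := fun n => v (ns n)) (f := f)
      (fun n => hgC (ns n)) (fun n => hvg (ns n)) hae
    obtain ⟨m, hhm, hmcl, hmmax⟩ := exists_maximal_above P hCL0 hbdd hhcl
    have hmC : m ∈ C := hmaxcl ⟨hmcl, hmmax⟩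
    have hfL0 : f ∈ L0plus P := by
      have hnn : ∀ᵐ ω ∂P, ∀ n, 0 ≤ v (ns n) ω := by
        rw [MeasureTheory.ae_all_iff]
        intro n
        filter_upwards [AEEqFun.coeFn_le.2 (hvL0 (ns n)),
          AEEqFun.coeFn_zero (β := ℝ) (μ := P)] with ω h1 h2
        rw [h2] at h1; exact h1
      show (0 : Ω →ₘ[P] ℝ) ≤ f
      rw [← AEEqFun.coeFn_le]
      filter_upwards [hae, hnn, AEEqFun.coeFn_zero (β := ℝ) (μ := P)] with ω h1 h2 h3
      rw [h3]
      exact ge_of_tendsto' h1 h2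
    exact ⟨hfL0, m, hmC, le_trans hfh hhm⟩
  · -- Bounded
    refine tendsto_of_tendsto_of_tendsto_of_le_of_le tendsto_const_nhds hbdd
      (fun ℓ => zero_le) fun ℓ => ?_
    refine iSup₂_le ?_
    rintro k ⟨hkL0, c, hcC, hkc⟩
    refine le_trans ?_ (le_iSup₂ (f := fun g (_ : g ∈ C) => P {ω | ℓ < g ω}) c hcC)
    refine measure_mono_ae ?_
    filter_upwards [AEEqFun.coeFn_le.2 hkc] with ω h1 h2
    exact lt_of_lt_of_le h2 h1
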